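/- (Representability in abelian functional theories.) In an abelian functional theory, the set of pure-state representable densities coincides with the set of ensemble-state representable densities, and both equal the convex hull of the set of weights: ι*(P) = ι*(E) = conv(Ω). -/

import Mathlib

open Filter Topology

noncomputable section

variable {V H : Type*}
  [AddCommGroup V] [Module ℝ V]
  [NormedAddCommGroup H] [InnerProductSpace ℂ H]

/-- The real expectation value `⟨ψ, T ψ⟩` of an operator `T` in the vector `ψ`. -/
def expectation (T : H →ₗ[ℂ] H) (ψ : H) : ℝ := (inner ℂ ψ (T ψ) : ℂ).re

/-- The ground state energy of the Hamiltonian `ι v + W`. -/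
def energy (ι : V →ₗ[ℝ] (H →ₗ[ℂ] H)) (W : H →ₗ[ℂ] H) (v : V) : ℝ :=
  sInf {r : ℝ | ∃ ψ : H, ‖ψ‖ = 1 ∧ r = expectation (ι v + W) ψ}

/-- The density `ι*(|ψ⟩⟨ψ|)` of the pure state given by the unit vector `ψ`,
as an element of the dual space `V*`. -/
def pureDensity (ι : V →ₗ[ℝ] (H →ₗ[ℂ] H)) (ψ : H) : Module.Dual ℝ V where
  toFun v := expectation (ι v) ψ
  map_add' v w := by simp [expectation, inner_add_right]
  map_smul' c v := by
    simp only [map_smul, LinearMap.smul_apply, expectation, RingHom.id_apply, smul_eq_mul]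
    rw [← algebraMap_smul ℂ c ((ι v) ψ), Complex.coe_algebraMap, inner_smul_right]
    simp

/-- An ensemble state: a positive semidefinite operator of unit trace. -/
def IsEnsembleState (Γ : H →ₗ[ℂ] H) : Prop :=
  Γ.IsSymmetric ∧ (∀ x : H, 0 ≤ (inner ℂ x (Γ x) : ℂ).re) ∧ LinearMap.trace ℂ H Γ = 1

/-- The density `ι*(Γ)` of a state `Γ`, `v ↦ Tr(Γ ι(v))`, as an element of `V*`. -/
def traceDensity (ι : V →ₗ[ℝ] (H →ₗ[ℂ] H)) (Γ : H →ₗ[ℂ] H) : Module.Dual ℝ V where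
  toFun v := (LinearMap.trace ℂ H (ι v ∘ₗ Γ)).re
  map_add' v w := by simp [map_add, LinearMap.add_comp]
  map_smul' c v := by
    simp only [map_smul, RingHom.id_apply, smul_eq_mul]
    rw [← algebraMap_smul ℂ c (ι v), LinearMap.smul_comp, map_smul, Complex.coe_algebraMap]
    simp

/-- The pure (Levy–Lieb) universal functional `F_p`. -/
def Fp (ι : V →ₗ[ℝ] (H →ₗ[ℂ] H)) (W : H →ₗ[ℂ] H) (ρ : Module.Dual ℝ V) : ℝ :=
  sInf {r : ℝ | ∃ ψ : H, ‖ψ‖ = 1 ∧ pureDensity ι ψ = ρ ∧ r = expectation W ψ}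

/-- The ensemble (Lieb/Valone) universal functional `F_e`. -/
def Fe (ι : V →ₗ[ℝ] (H →ₗ[ℂ] H)) (W : H →ₗ[ℂ] H) (ρ : Module.Dual ℝ V) : ℝ :=
  sInf {r : ℝ | ∃ Γ : H →ₗ[ℂ] H, IsEnsembleState Γ ∧ traceDensity ι Γ = ρ ∧
    r = (LinearMap.trace ℂ H (W ∘ₗ Γ)).re}

/-- The weight space of a functional `α ∈ V*`. -/
def weightSpace (ι : V →ₗ[ℝ] (H →ₗ[ℂ] H)) (α : Module.Dual ℝ V) : Submodule ℂ H where
  carrier := {ψ : H | ∀ v : V, ι v ψ = (α v : ℂ) • ψ}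
  add_mem' := by
    intro a b ha hb v
    rw [map_add, ha v, hb v, smul_add]
  zero_mem' := by intro v; simp
  smul_mem' := by
    intro c x hx v
    rw [LinearMap.map_smul, hx v, smul_comm]

/-- The set of weights of an abelian functional theory. -/
def weights (ι : V →ₗ[ℝ] (H →ₗ[ℂ] H)) : Set (Module.Dual ℝ V) :=
  {α : Module.Dual ℝ V | weightSpace ι α ≠ ⊥}

/-- The derivative of the density map along the set of pure states at `|Ψ⟩⟨Ψ|`,
applied to the tangent vector `φ ⊥ Ψ`: the functional `v ↦ 2 Re⟨φ, ι(v)Ψ⟩`. -/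
def derivDensity (ι : V →ₗ[ℝ] (H →ₗ[ℂ] H)) (Ψ φ : H) : Module.Dual ℝ V where
  toFun v := 2 * (inner ℂ φ (ι v Ψ) : ℂ).re
  map_add' v w := by simp [inner_add_right]; ring
  map_smul' c v := by
    simp only [map_smul, LinearMap.smul_apply, RingHom.id_apply, smul_eq_mul]
    rw [← algebraMap_smul ℂ c ((ι v) Ψ), Complex.coe_algebraMap, inner_smul_right]
    simp; ring

/-- `ρ` is a relative interior point of the convex set `C` (i.e. an interior point
of `C` within its affine span): every point of `C` lies on a segment inside `C`
having `ρ` in its (open) interior. -/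
def IsRelInterior {M : Type*} [AddCommGroup M] [Module ℝ M] (C : Set M) (ρ : M) : Prop :=
  ρ ∈ C ∧ ∀ σ ∈ C, ∃ τ ∈ C, ∃ t : ℝ, 0 < t ∧ t < 1 ∧ ρ = t • σ + (1 - t) • τ

/-- Strong orthogonality: componentwise orthogonality in every weight space. -/
def StronglyOrthogonal [FiniteDimensional ℂ H] (ι : V →ₗ[ℝ] (H →ₗ[ℂ] H)) (Φ Φ' : H) : Prop :=
  ∀ α : Module.Dual ℝ V, weightSpace ι α ≠ ⊥ →
    (inner ℂ ((weightSpace ι α).orthogonalProjectionOnto Φ)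
        ((weightSpace ι α).orthogonalProjectionOnto Φ') : ℂ) = 0

/-- The `k`-convex hull of a set. -/
def convk {M : Type*} [AddCommGroup M] [Module ℝ M] (k : ℕ) (X : Set M) : Set M :=
  {ρ : M | ∃ (t : Fin k → ℝ) (x : Fin k → M),
    (∀ i, 0 ≤ t i) ∧ (∑ i, t i) = 1 ∧ (∀ i, x i ∈ X) ∧ (∑ i, t i • x i) = ρ}

/-- The operator `A ⊗ id` on `H ⊗ ℂᵏ ≅ H ⊕ ⋯ ⊕ H` (k summands). -/
def opBar (k : ℕ) (A : H →ₗ[ℂ] H) :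
    (PiLp 2 fun _ : Fin k => H) →ₗ[ℂ] (PiLp 2 fun _ : Fin k => H) where
  toFun x := WithLp.toLp 2 (fun i => A (x i))
  map_add' x y := by ext i; simp [PiLp.add_apply]
  map_smul' c x := by ext i; simp [PiLp.smul_apply]

/-- The potential map `v ↦ ι(v) ⊗ id` of the `k`-convexified functional theory. -/
def potBar (k : ℕ) (ι : V →ₗ[ℝ] (H →ₗ[ℂ] H)) :
    V →ₗ[ℝ] ((PiLp 2 fun _ : Fin k => H) →ₗ[ℂ] (PiLp 2 fun _ : Fin k => H)) where
  toFun v := opBar k (ι v)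
  map_add' v w := by
    apply LinearMap.ext; intro x; ext i
    simp [opBar, map_add]
  map_smul' c v := by
    apply LinearMap.ext; intro x; ext i
    simp [opBar, map_smul]

/-- The subspace of potentials mapped to real multiples of the identity operator. -/
def scalarPart (ι : V →ₗ[ℝ] (H →ₗ[ℂ] H)) : Submodule ℝ V where
  carrier := {v : V | ∃ c : ℝ, ι v = c • (LinearMap.id : H →ₗ[ℂ] H)}
  add_mem' := by
    rintro a b ⟨c, hc⟩ ⟨d, hd⟩
    exact ⟨c + d, by rw [map_add, hc, hd, add_smul]⟩
  zero_mem' := ⟨0, by simp⟩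
  smul_mem' := by
    rintro a v ⟨c, hc⟩
    exact ⟨a * c, by rw [map_smul, hc, smul_smul]⟩

section Helpers

variable {V H : Type*}
  [AddCommGroup V] [Module ℝ V]
  [NormedAddCommGroup H] [InnerProductSpace ℂ H]

lemma mem_weightSpace_iff {ι : V →ₗ[ℝ] (H →ₗ[ℂ] H)} {α : Module.Dual ℝ V} {ψ : H} :
    ψ ∈ weightSpace ι α ↔ ∀ v : V, ι v ψ = (α v : ℂ) • ψ := Iff.rfl

lemma weight_ortho (ι : V →ₗ[ℝ] (H →ₗ[ℂ] H)) (hι : ∀ v : V, (ι v).IsSymmetric)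
    {α β : Module.Dual ℝ V} (hab : α ≠ β) {ψ φ : H}
    (hψ : ψ ∈ weightSpace ι α) (hφ : φ ∈ weightSpace ι β) :
    (inner ℂ ψ φ : ℂ) = 0 := by
  obtain ⟨v, hv⟩ : ∃ v, α v ≠ β v := by
    by_contra h; push_neg at h; exact hab (LinearMap.ext h)
  have h1 : (inner ℂ ψ (ι v φ) : ℂ) = (β v : ℂ) * inner ℂ ψ φ := by
    rw [mem_weightSpace_iff.mp hφ v, inner_smul_right]
  have h2 : (inner ℂ ψ (ι v φ) : ℂ) = (α v : ℂ) * inner ℂ ψ φ := by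
    rw [← hι v ψ φ, mem_weightSpace_iff.mp hψ v, inner_smul_left, Complex.conj_ofReal]
  by_contra hx
  exact hv (by exact_mod_cast mul_right_cancel₀ hx (h2.symm.trans h1))

lemma trace_onb [FiniteDimensional ℂ H] {κ : Type*} [Fintype κ] [DecidableEq κ]
    (b : OrthonormalBasis κ ℂ H) (T : H →ₗ[ℂ] H) :
    LinearMap.trace ℂ H T = ∑ i, (inner ℂ (b i) (T (b i)) : ℂ) := by
  rw [LinearMap.trace_eq_matrix_trace ℂ b.toBasis, Matrix.trace]
  refine Finset.sum_congr rfl fun i _ => ?_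
  rw [Matrix.diag_apply, LinearMap.toMatrix_apply, b.coe_toBasis_repr_apply,
    b.repr_apply_apply, b.coe_toBasis]

lemma weight_sup_top [FiniteDimensional ℂ H] (ι : V →ₗ[ℝ] (H →ₗ[ℂ] H))
    (hι : ∀ v : V, (ι v).IsSymmetric)
    (habel : ∀ v w : V, ι v ∘ₗ ι w = ι w ∘ₗ ι v) :
    ⨆ α : Module.Dual ℝ V, weightSpace ι α = ⊤ := by
  have hcomm : Pairwise (Function.onFun Commute fun v : V => ι v) := fun v w _ => by
    simpa [Commute, SemiconjBy, Module.End.mul_eq_comp] using habel v w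
  have htop := LinearMap.IsSymmetric.iSup_iInf_eq_top_of_commute
    (T := fun v : V => ι v) hι hcomm
  rw [eq_top_iff, ← htop]
  refine iSup_le fun χ => fun ψ hψ => ?_
  rcases eq_or_ne ψ 0 with rfl | hne
  · exact Submodule.zero_mem _
  have hmem : ∀ v, ι v ψ = χ v • ψ := fun v =>
    Module.End.mem_eigenspace_iff.mp ((Submodule.mem_iInf _).mp hψ v)
  have hinj : Function.Injective (fun c : ℂ => c • ψ) := fun a b hab => by
    have : (a - b) • ψ = 0 := by
      simpa [sub_smul] using sub_eq_zero_of_eq hab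
    rcases smul_eq_zero.mp this with h | h
    · exact sub_eq_zero.mp h
    · exact absurd h hne
  have hreal : ∀ v, ((χ v).re : ℂ) = χ v := fun v => by
    have h1 : (inner ℂ (ι v ψ) ψ : ℂ) = (starRingEnd ℂ) (χ v) * inner ℂ ψ ψ := by
      rw [hmem v, inner_smul_left]
    have h2 : (inner ℂ ψ (ι v ψ) : ℂ) = χ v * inner ℂ ψ ψ := by
      rw [hmem v, inner_smul_right]
    have h3 := hι v ψ ψ
    have hne' : (inner ℂ ψ ψ : ℂ) ≠ 0 := inner_self_ne_zero.mpr hne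
    exact Complex.conj_eq_iff_re.mp (mul_right_cancel₀ hne' (by rw [← h1, h3, h2]))
  have hadd : ∀ v w, χ (v + w) = χ v + χ w := fun v w => hinj (by
    simp only []
    rw [← hmem (v + w), map_add, LinearMap.add_apply, hmem v, hmem w, add_smul])
  have hsmul : ∀ (c : ℝ) (v : V), χ (c • v) = (c : ℂ) * χ v := fun c v => hinj (by
    simp only []
    rw [← hmem (c • v), map_smul, LinearMap.smul_apply, hmem v,
      ← algebraMap_smul ℂ c ((χ v) • ψ), Complex.coe_algebraMap, smul_smul])
  set α : Module.Dual ℝ V :=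
    { toFun := fun v => (χ v).re
      map_add' := fun v w => by simp only [hadd, Complex.add_re]
      map_smul' := fun c v => by simp only [hsmul]; simp [Complex.mul_re] }
  have hψα : ψ ∈ weightSpace ι α := by
    intro v
    rw [hmem v]
    congr 1
    exact (hreal v).symm
  exact Submodule.mem_iSup_of_mem α hψα

lemma weights_finite [FiniteDimensional ℂ H] (ι : V →ₗ[ℝ] (H →ₗ[ℂ] H))
    (hι : ∀ v : V, (ι v).IsSymmetric) : (weights ι).Finite := by
  by_contra hinf
  rw [← Set.not_infinite, not_not] at hinf
  haveI := hinf.to_subtype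
  have hvec : ∀ α : weights ι, ∃ ψ : H, ψ ∈ weightSpace ι α.1 ∧ ψ ≠ 0 := by
    rintro ⟨α, hα⟩
    obtain ⟨ψ, hmem, h0⟩ := Submodule.exists_mem_ne_zero_of_ne_bot hα
    exact ⟨ψ, hmem, h0⟩
  choose f hf hf0 using hvec
  have hli : LinearIndependent ℂ f := by
    have horth : ∀ (i j : weights ι), i ≠ j → (inner ℂ (f i) (f j) : ℂ) = 0 := fun i j hij =>
      weight_ortho ι hι (Subtype.coe_injective.ne hij) (hf i) (hf j)
    exact linearIndependent_of_ne_zero_of_inner_eq_zero hf0 horth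
  exact Module.Finite.not_linearIndependent_of_infinite (R := ℂ) (M := H) (v := f) hli

/-- The rank-one projector onto the line spanned by `ψ`. -/
def rankOne (ψ : H) : H →ₗ[ℂ] H where
  toFun x := (inner ℂ ψ x : ℂ) • ψ
  map_add' x y := by simp [inner_add_right, add_smul]
  map_smul' c x := by simp [inner_smul_right, smul_smul]

lemma rankOne_ensemble [FiniteDimensional ℂ H] {ψ : H} (hψ : ‖ψ‖ = 1) :
    IsEnsembleState (rankOne ψ) := by
  classical
  refine ⟨fun x y => ?_, fun x => ?_, ?_⟩
  · show (inner ℂ ((inner ℂ ψ x : ℂ) • ψ) y : ℂ) = inner ℂ x ((inner ℂ ψ y : ℂ) • ψ)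
    rw [inner_smul_left, inner_smul_right, inner_conj_symm]
    ring
  · show 0 ≤ (inner ℂ x ((inner ℂ ψ x : ℂ) • ψ) : ℂ).re
    rw [inner_smul_right, ← inner_conj_symm x ψ, Complex.mul_conj]
    simp [Complex.normSq_nonneg]
  · set b := stdOrthonormalBasis ℂ H
    rw [trace_onb b]
    have : ∀ i, (inner ℂ (b i) (rankOne ψ (b i)) : ℂ)
        = inner ℂ ψ (b i) * inner ℂ (b i) ψ := fun i => by
      show (inner ℂ (b i) ((inner ℂ ψ (b i) : ℂ) • ψ) : ℂ) = _
      rw [inner_smul_right]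
    simp_rw [this]
    rw [b.sum_inner_mul_inner ψ ψ, inner_self_eq_norm_sq_to_K, hψ]
    norm_num

lemma rankOne_density [FiniteDimensional ℂ H] (ι : V →ₗ[ℝ] (H →ₗ[ℂ] H)) (ψ : H) :
    traceDensity ι (rankOne ψ) = pureDensity ι ψ := by
  classical
  apply LinearMap.ext; intro v
  show (LinearMap.trace ℂ H (ι v ∘ₗ rankOne ψ)).re = (inner ℂ ψ (ι v ψ) : ℂ).re
  set b := stdOrthonormalBasis ℂ H
  rw [trace_onb b]
  have : ∀ i, (inner ℂ (b i) ((ι v ∘ₗ rankOne ψ) (b i)) : ℂ)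
      = inner ℂ ψ (b i) * inner ℂ (b i) (ι v ψ) := fun i => by
    show (inner ℂ (b i) (ι v ((inner ℂ ψ (b i) : ℂ) • ψ)) : ℂ) = _
    rw [map_smul, inner_smul_right]
  simp_rw [this]
  rw [b.sum_inner_mul_inner ψ (ι v ψ)]

end Helpers

/-- representability in abelian functional theories. -/
theorem abelian_representability [FiniteDimensional ℝ V] [FiniteDimensional ℂ H] [Nontrivial H]
    (ι : V →ₗ[ℝ] (H →ₗ[ℂ] H)) (W : H →ₗ[ℂ] H)
    (hι : ∀ v : V, (ι v).IsSymmetric) (hW : W.IsSymmetric)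
    (habel : ∀ v w : V, ι v ∘ₗ ι w = ι w ∘ₗ ι v) :
    {σ : Module.Dual ℝ V | ∃ ψ : H, ‖ψ‖ = 1 ∧ pureDensity ι ψ = σ}
      = {σ : Module.Dual ℝ V | ∃ Γ : H →ₗ[ℂ] H, IsEnsembleState Γ ∧ traceDensity ι Γ = σ} ∧
    {σ : Module.Dual ℝ V | ∃ Γ : H →ₗ[ℂ] H, IsEnsembleState Γ ∧ traceDensity ι Γ = σ}
      = convexHull ℝ (weights ι) := by
  classical
  have hfin := weights_finite ι hι
  haveI : Fintype (weights ι) := hfin.fintype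
  -- pure ⊆ ensemble
  have hPE : {σ : Module.Dual ℝ V | ∃ ψ : H, ‖ψ‖ = 1 ∧ pureDensity ι ψ = σ} ⊆
      {σ : Module.Dual ℝ V | ∃ Γ : H →ₗ[ℂ] H, IsEnsembleState Γ ∧ traceDensity ι Γ = σ} := by
    rintro σ ⟨ψ, hψ, rfl⟩
    exact ⟨rankOne ψ, rankOne_ensemble hψ, rankOne_density ι ψ⟩
  -- orthonormal basis of weight vectors
  have hOrth : OrthogonalFamily ℂ (fun i : weights ι => (weightSpace ι i.1 : Submodule ℂ H))
      (fun i => (weightSpace ι i.1).subtypeₗᵢ) := fun i j hij v w =>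
    weight_ortho ι hι (Subtype.coe_injective.ne hij) v.2 w.2
  have hsup : (⨆ i : weights ι, weightSpace ι i.1) = ⊤ := by
    rw [eq_top_iff, ← weight_sup_top ι hι habel]
    refine iSup_le fun α => ?_
    by_cases h : weightSpace ι α = ⊥
    · rw [h]; exact bot_le
    · exact le_iSup (fun i : weights ι => weightSpace ι i.1) ⟨α, h⟩
  have hInt : DirectSum.IsInternal (fun i : weights ι => weightSpace ι i.1) := by
    rw [hOrth.isInternal_iff, hsup, Submodule.top_orthogonal_eq_bot]
  set b := hInt.collectedOrthonormalBasis hOrth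
    (fun i => stdOrthonormalBasis ℂ (weightSpace ι i.1)) with hbdef
  have hb : ∀ j, b j ∈ weightSpace ι j.1.1 := fun j =>
    hInt.collectedOrthonormalBasis_mem hOrth _ j
  -- ensemble ⊆ conv
  have hEC : {σ : Module.Dual ℝ V | ∃ Γ : H →ₗ[ℂ] H, IsEnsembleState Γ ∧ traceDensity ι Γ = σ}
      ⊆ convexHull ℝ (weights ι) := by
    rintro σ ⟨Γ, ⟨hsym, hpos, htr⟩, rfl⟩
    set p : (Σ i : weights ι, Fin (Module.finrank ℂ (weightSpace ι i.1))) → ℝ :=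
      fun j => (inner ℂ (b j) (Γ (b j)) : ℂ).re with hpdef
    have hp0 : ∀ j, 0 ≤ p j := fun j => hpos (b j)
    have hps : ∑ j, p j = 1 := by
      have h1 := trace_onb b Γ
      rw [htr] at h1
      have h2 := congrArg Complex.re h1.symm
      simpa [Complex.re_sum] using h2
    have hrep : traceDensity ι Γ
        = ∑ j, p j • (j.1.1 : Module.Dual ℝ V) := by
      apply LinearMap.ext; intro v
      have hL : traceDensity ι Γ v = (LinearMap.trace ℂ H (ι v ∘ₗ Γ)).re := rfl
      rw [hL, trace_onb b (ι v ∘ₗ Γ), Complex.re_sum, LinearMap.sum_apply]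
      refine Finset.sum_congr rfl fun j _ => ?_
      have h1 : (inner ℂ (b j) ((ι v ∘ₗ Γ) (b j)) : ℂ)
          = ((j.1.1 v : ℝ) : ℂ) * inner ℂ (b j) (Γ (b j)) := by
        rw [LinearMap.comp_apply, ← hι v (b j) (Γ (b j)), hb j v, inner_smul_left,
          Complex.conj_ofReal]
      rw [h1, LinearMap.smul_apply]
      simp only [hpdef, smul_eq_mul, Complex.mul_re, Complex.ofReal_re, Complex.ofReal_im,
        zero_mul, sub_zero]
      ring
    rw [hrep, ← Finset.centerMass_eq_of_sum_1 Finset.univ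
      (fun j : (Σ i : weights ι, Fin (Module.finrank ℂ (weightSpace ι i.1))) =>
        (j.1.1 : Module.Dual ℝ V)) hps]
    exact Finset.centerMass_mem_convexHull _ (fun j _ => hp0 j)
      (by rw [hps]; norm_num) (fun j _ => j.1.2)
  -- conv ⊆ pure
  have hCP : convexHull ℝ (weights ι) ⊆
      {σ : Module.Dual ℝ V | ∃ ψ : H, ‖ψ‖ = 1 ∧ pureDensity ι ψ = σ} := by
    intro ρ hρ
    rw [← hfin.coe_toFinset, Finset.convexHull_eq] at hρ
    obtain ⟨w, hw0, hw1, hwc⟩ := hρ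
    set S := hfin.toFinset with hSdef
    have hw0' : ∀ α : {x // x ∈ S}, 0 ≤ w α.1 := fun α => hw0 α.1 α.2
    have hvec : ∀ α : {x // x ∈ S}, ∃ e : H, e ∈ weightSpace ι α.1 ∧ ‖e‖ = 1 := by
      rintro ⟨α, hα⟩
      have hα' : weightSpace ι α ≠ ⊥ := by
        simpa [hSdef, Set.Finite.mem_toFinset, weights] using hα
      obtain ⟨x, hx, h0⟩ := Submodule.exists_mem_ne_zero_of_ne_bot hα'
      refine ⟨((‖x‖ : ℂ))⁻¹ • x, Submodule.smul_mem _ _ hx, ?_⟩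
      have hx0 : ‖x‖ ≠ 0 := norm_ne_zero_iff.mpr h0
      rw [norm_smul]
      simp [hx0]
    choose e he hen using hvec
    have hee : ∀ i j : {x // x ∈ S}, (inner ℂ (e i) (e j) : ℂ) = if i = j then 1 else 0 := by
      intro i j
      by_cases h : i = j
      · subst h
        rw [if_pos rfl, inner_self_eq_norm_sq_to_K, hen i]
        norm_num
      · rw [if_neg h]
        exact weight_ortho ι hι (Subtype.coe_injective.ne h) (he i) (he j)
    have key : ∀ c d : {x // x ∈ S} → ℂ,
        (inner ℂ (∑ i, c i • e i) (∑ i, d i • e i) : ℂ)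
          = ∑ i, (starRingEnd ℂ) (c i) * d i := by
      intro c d
      rw [sum_inner]
      refine Finset.sum_congr rfl fun i _ => ?_
      rw [inner_sum, Finset.sum_eq_single i]
      · rw [inner_smul_left, inner_smul_right, hee i i, if_pos rfl, mul_one]
      · intro j _ hj
        rw [inner_smul_left, inner_smul_right, hee i j, if_neg (Ne.symm hj), mul_zero, mul_zero]
      · intro h; exact absurd (Finset.mem_univ i) h
    set ψ : H := ∑ i : {x // x ∈ S}, ((Real.sqrt (w i.1) : ℝ) : ℂ) • e i with hψdef
    have hinner : ∀ v : V, (inner ℂ ψ (ι v ψ) : ℂ) = ∑ i : {x // x ∈ S}, ((w i.1 * i.1 v : ℝ) : ℂ) := by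
      intro v
      have hιψ : ι v ψ = ∑ i : {x // x ∈ S},
          (((Real.sqrt (w i.1) : ℝ) : ℂ) * ((i.1 v : ℝ) : ℂ)) • e i := by
        rw [hψdef, map_sum]
        refine Finset.sum_congr rfl fun i _ => ?_
        rw [map_smul, mem_weightSpace_iff.mp (he i) v, smul_smul]
      rw [hψdef, hιψ, key]
      refine Finset.sum_congr rfl fun i _ => ?_
      rw [Complex.conj_ofReal, ← mul_assoc, ← Complex.ofReal_mul,
        Real.mul_self_sqrt (hw0' i), Complex.ofReal_mul]
    have hnorm : ‖ψ‖ = 1 := by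
      have h1 : (inner ℂ ψ ψ : ℂ) = 1 := by
        rw [hψdef, key]
        have : ∀ i : {x // x ∈ S}, (starRingEnd ℂ) ((Real.sqrt (w i.1) : ℝ) : ℂ)
            * ((Real.sqrt (w i.1) : ℝ) : ℂ) = ((w i.1 : ℝ) : ℂ) := fun i => by
          rw [Complex.conj_ofReal, ← Complex.ofReal_mul, Real.mul_self_sqrt (hw0' i)]
        rw [Finset.sum_congr rfl fun i _ => this i, ← Complex.ofReal_sum]
        norm_cast
        rw [Finset.sum_coe_sort S w, hw1]
      have h2 : ((‖ψ‖ ^ 2 : ℝ) : ℂ) = 1 := by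
        rw [← h1, inner_self_eq_norm_sq_to_K]
        norm_cast
      have h3 : (‖ψ‖ : ℝ) ^ 2 = 1 := by exact_mod_cast h2
      nlinarith [norm_nonneg ψ]
    refine ⟨ψ, hnorm, ?_⟩
    apply LinearMap.ext; intro v
    have hL : pureDensity ι ψ v = (inner ℂ ψ (ι v ψ) : ℂ).re := rfl
    rw [hL, hinner v, ← Complex.ofReal_sum, Complex.ofReal_re]
    have hρv : ρ v = ∑ α ∈ S, w α * α v := by
      rw [← hwc, Finset.centerMass_eq_of_sum_1 _ _ hw1]
      simp [LinearMap.sum_apply]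
    rw [hρv, ← Finset.sum_coe_sort S (fun α => w α * α v)]
  constructor
  · exact Set.Subset.antisymm hPE fun σ h => hCP (hEC h)
  · exact Set.Subset.antisymm hEC fun σ h => hPE (hCP h)


end
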